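/- Let W and L be real symmetric (N+1)×(N+1) positive semidefinite matrices with W·1 = 0 and L·1 = 0, and suppose L has rank N. Then trace(W L^+) = trace(W̃ L̃^{-1}), where L^+ is the Moore–Penrose pseudoinverse of L, and W̃, L̃ are the N×N matrices obtained by deleting the first row and column of W and L respectively (L̃ being invertible). -/

import Mathlib

open Matrix

theorem stmt3 (N : ℕ) (hN : 0 < N)
    (W L : Matrix (Fin (N + 1)) (Fin (N + 1)) ℝ)
    (hWpsd : W.PosSemidef) (hLpsd : L.PosSemidef)
    (hW1 : W *ᵥ (fun _ => (1 : ℝ)) = 0) (hL1 : L *ᵥ (fun _ => (1 : ℝ)) = 0)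
    (hrank : L.rank = N)
    (Lp : Matrix (Fin (N + 1)) (Fin (N + 1)) ℝ)
    (h1 : L * Lp * L = L) (h2 : Lp * L * Lp = Lp)
    (h3 : (L * Lp)ᵀ = L * Lp) (h4 : (Lp * L)ᵀ = Lp * L)
    (Wt Lt : Matrix (Fin N) (Fin N) ℝ)
    (hWt : Wt = W.submatrix Fin.succ Fin.succ)
    (hLt : Lt = L.submatrix Fin.succ Fin.succ) :
    IsUnit Lt.det ∧ Matrix.trace (W * Lp) = Matrix.trace (Wt * Lt⁻¹) := by
  have hLsym : Lᵀ = L := Matrix.IsSymm.eq (by simpa using hLpsd.1)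
  have hWsym : Wᵀ = W := Matrix.IsSymm.eq (by simpa using hWpsd.1)
  -- kernel of L is spanned by the all-ones vector
  have hker : ∀ v : Fin (N+1) → ℝ, L *ᵥ v = 0 → ∃ c : ℝ, v = fun _ => c := by
    have h1mem : (fun _ => (1:ℝ)) ∈ LinearMap.ker L.mulVecLin := by
      simpa [Matrix.mulVecLin_apply] using hL1
    have hone : (fun _ => (1:ℝ)) ≠ (0 : Fin (N+1) → ℝ) := by
      intro h; exact one_ne_zero (congrFun h 0)
    have hfin : Module.finrank ℝ (LinearMap.ker L.mulVecLin) = 1 := by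
      have hrn := LinearMap.finrank_range_add_finrank_ker L.mulVecLin
      rw [show Module.finrank ℝ (Fin (N+1) → ℝ) = N+1 by simp] at hrn
      have hr : Module.finrank ℝ (LinearMap.range L.mulVecLin) = N := hrank
      omega
    have hspan : Submodule.span ℝ {(fun _ => (1:ℝ))} = LinearMap.ker L.mulVecLin := by
      apply Submodule.eq_of_le_of_finrank_eq
      · rwa [Submodule.span_singleton_le_iff_mem]
      · rw [finrank_span_singleton hone, hfin]
    intro v hv
    have hvmem : v ∈ Submodule.span ℝ {(fun _ => (1:ℝ))} := by
      rw [hspan]; simpa [Matrix.mulVecLin_apply] using hv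
    obtain ⟨c, hc⟩ := Submodule.mem_span_singleton.mp hvmem
    refine ⟨c, ?_⟩
    funext i
    have := congrFun hc i
    simpa using this.symm
  -- Lt is positive definite, hence has unit determinant
  have hLtpsd : Lt.PosSemidef := by rw [hLt]; exact hLpsd.submatrix _
  have hsub : ∀ (M : Matrix (Fin (N+1)) (Fin (N+1)) ℝ) (x : Fin N → ℝ) (k : Fin N),
      (M *ᵥ Fin.cons 0 x) k.succ = (M.submatrix Fin.succ Fin.succ *ᵥ x) k := by
    intro M x k
    simp [Matrix.mulVec, dotProduct, Fin.sum_univ_succ]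
  have hLtpd : Lt.PosDef := by
    refine posDef_iff_dotProduct_mulVec.mpr ⟨hLtpsd.1, fun x hx => ?_⟩
    have hquad : dotProduct (star x) (Lt *ᵥ x)
        = dotProduct (star (Fin.cons 0 x : Fin (N+1) → ℝ)) (L *ᵥ Fin.cons 0 x) := by
      simp only [dotProduct, Fin.sum_univ_succ, Fin.cons_zero, Fin.cons_succ,
        Pi.star_apply, star_zero, zero_mul, zero_add]
      refine Finset.sum_congr rfl (fun k _ => ?_)
      rw [hsub, ← hLt]
    have hge : 0 ≤ dotProduct (star x) (Lt *ᵥ x) := hLtpsd.dotProduct_mulVec_nonneg x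
    rcases eq_or_lt_of_le hge with heq | hlt
    · exfalso
      have hz : L *ᵥ (Fin.cons 0 x : Fin (N+1) → ℝ) = 0 := by
        rw [← hLpsd.dotProduct_mulVec_zero_iff]
        rw [← hquad, ← heq]
      obtain ⟨c, hc⟩ := hker _ hz
      have hc0 : c = 0 := by
        have := congrFun hc 0
        simpa using this.symm
      apply hx
      funext k
      have := congrFun hc k.succ
      simp only [Fin.cons_succ] at this
      rw [this, hc0]; rfl
    · exact hlt
  have hdet : IsUnit Lt.det := isUnit_iff_ne_zero.mpr hLtpd.det_pos.ne'
  have hLtinv : Lt⁻¹ * Lt = 1 := Matrix.nonsing_inv_mul Lt hdet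
  -- W kills any matrix whose columns are in ker L
  have hWker : ∀ M : Matrix (Fin (N+1)) (Fin (N+1)) ℝ, L * M = 0 → W * M = 0 := by
    intro M hM
    ext i j
    have hcol : L *ᵥ (fun k => M k j) = 0 := by
      funext i'
      have := congrFun (congrFun hM i') j
      simpa [Matrix.mul_apply, Matrix.mulVec, dotProduct] using this
    obtain ⟨c, hc⟩ := hker _ hcol
    have hsum : ∑ k, W i k * M k j = (∑ k, W i k) * c := by
      rw [Finset.sum_mul]
      exact Finset.sum_congr rfl (fun k _ => by rw [congrFun hc k])
    have hWrow : (∑ k, W i k) = 0 := by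
      have := congrFun hW1 i
      simpa [Matrix.mulVec, dotProduct] using this
    rw [Matrix.mul_apply, hsum, hWrow, zero_mul]
    rfl
  -- W = W * Lp * L and W = L * Lp * W
  have hA1 : W * (Lp * L) = W := by
    have h0 : L * (1 - Lp * L) = 0 := by
      rw [Matrix.mul_sub, Matrix.mul_one, ← Matrix.mul_assoc, h1, sub_self]
    have := hWker _ h0
    rw [Matrix.mul_sub, Matrix.mul_one, sub_eq_zero] at this
    exact this.symm
  have hA2 : (L * Lp) * W = W := by
    have h0' : (1 - L * Lp) * L = 0 := by
      rw [Matrix.sub_mul, Matrix.one_mul, h1, sub_self]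
    have h0 : L * (1 - L * Lp) = 0 := by
      have ht := congrArg Matrix.transpose h0'
      rw [Matrix.transpose_mul, Matrix.transpose_sub, Matrix.transpose_one, h3, hLsym,
        Matrix.transpose_zero] at ht
      exact ht
    have h5 := hWker _ h0
    rw [Matrix.mul_sub, Matrix.mul_one, sub_eq_zero] at h5
    have ht := congrArg Matrix.transpose h5
    rw [Matrix.transpose_mul, h3, hWsym] at ht
    exact ht.symm
  -- the bordered inverse G
  set G : Matrix (Fin (N+1)) (Fin (N+1)) ℝ :=
    Matrix.of (Fin.cons (fun _ => 0) (fun i => Fin.cons 0 (fun j => Lt⁻¹ i j))) with hG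
  have hG0 : ∀ j, G 0 j = 0 := fun j => rfl
  have hGs0 : ∀ i : Fin N, G i.succ 0 = 0 := fun i => rfl
  have hGss : ∀ i j : Fin N, G i.succ j.succ = Lt⁻¹ i j := fun i j => rfl
  -- G *ᵥ z
  have hGmv : ∀ z : Fin (N+1) → ℝ,
      G *ᵥ z = Fin.cons 0 (Lt⁻¹ *ᵥ (z ∘ Fin.succ)) := by
    intro z
    funext i
    refine Fin.cases ?_ (fun k => ?_) i
    · simp [Matrix.mulVec, dotProduct, hG]
    · simp [Matrix.mulVec, dotProduct, Fin.sum_univ_succ, hG]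
  -- L*ᵥ on vectors vanishing at 0
  have hLmv : ∀ y : Fin (N+1) → ℝ, y 0 = 0 →
      ∀ k : Fin N, (L *ᵥ y) k.succ = (Lt *ᵥ (y ∘ Fin.succ)) k := by
    intro y hy k
    have : y = Fin.cons 0 (y ∘ Fin.succ) := by
      funext i
      refine Fin.cases ?_ (fun m => ?_) i <;> simp [hy]
    rw [hLt]
    conv_lhs => rw [this]
    exact hsub L (y ∘ Fin.succ) k
  -- key identity L * G * L = L
  have hGL : L * G * L = L := by
    have hvec : ∀ x : Fin (N+1) → ℝ, (L * G * L) *ᵥ x = L *ᵥ x := by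
      intro x
      set y : Fin (N+1) → ℝ := x - (fun _ => x 0) with hy
      have hy0 : y 0 = 0 := by simp [hy]
      have hLx : L *ᵥ x = L *ᵥ y := by
        rw [hy, Matrix.mulVec_sub, show (fun _ => x 0) = (x 0) • (fun _ => (1:ℝ)) by
          funext i; simp, Matrix.mulVec_smul, hL1]
        simp
      have hGLy : G *ᵥ (L *ᵥ y) = y := by
        rw [hGmv]
        have htail : (L *ᵥ y) ∘ Fin.succ = Lt *ᵥ (y ∘ Fin.succ) := by
          funext k; exact hLmv y hy0 k
        rw [htail, Matrix.mulVec_mulVec, hLtinv, Matrix.one_mulVec]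
        funext i
        refine Fin.cases ?_ (fun m => ?_) i <;> simp [hy0]
      calc (L * G * L) *ᵥ x = L *ᵥ (G *ᵥ (L *ᵥ x)) := by
            rw [← Matrix.mulVec_mulVec, ← Matrix.mulVec_mulVec]
        _ = L *ᵥ y := by rw [hLx, hGLy]
        _ = L *ᵥ x := hLx.symm
    ext i j
    have := congrFun (hvec (Pi.single j 1)) i
    simpa [Matrix.mulVec_single] using this
  -- trace manipulations
  have htr1 : Matrix.trace (W * Lp) = Matrix.trace ((Lp * W * Lp) * L) := by
    conv_lhs => rw [← hA2]
    rw [show L * Lp * W * Lp = L * (Lp * W * Lp) by noncomm_ring]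
    rw [Matrix.trace_mul_comm]
  have htr2 : Matrix.trace (W * G) = Matrix.trace ((Lp * W * Lp) * L) := by
    conv_lhs => rw [← hA1, ← hA2]
    rw [show L * Lp * W * (Lp * L) * G = (L * (Lp * W * Lp)) * (L * G) by noncomm_ring,
      Matrix.trace_mul_comm (L * (Lp * W * Lp)) (L * G),
      show (L * G) * (L * (Lp * W * Lp)) = (L * G * L) * (Lp * W * Lp) by noncomm_ring,
      hGL, Matrix.trace_mul_comm L (Lp * W * Lp)]
  have htr3 : Matrix.trace (W * G) = Matrix.trace (Wt * Lt⁻¹) := by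
    rw [hWt]
    simp only [Matrix.trace, Matrix.diag, Matrix.mul_apply, Matrix.submatrix_apply]
    rw [Fin.sum_univ_succ]
    have hz : ∑ j, W 0 j * G j 0 = 0 := by
      apply Finset.sum_eq_zero
      intro j _
      refine Fin.cases ?_ (fun m => ?_) j
      · rw [hG0]; ring
      · rw [hGs0]; ring
    rw [hz, zero_add]
    refine Finset.sum_congr rfl (fun k _ => ?_)
    rw [Fin.sum_univ_succ, hG0, mul_zero, zero_add]
    exact Finset.sum_congr rfl (fun m _ => by rw [hGss])
  exact ⟨hdet, by rw [htr1, ← htr2, htr3]⟩
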